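/- For random variables Θ (taking finitely many values θ_1,…,θ_m) and X, and an observation Y such that the conditional density of Y given (Θ, X) equals L(Y | X) (not depending on Θ), the conditional probability satisfies P(Θ = θ, X ∈ A | Y) = E[ P(Θ = θ | X) · 1_{X ∈ A} · L(Y|X) ] / E[ L(Y|X) ], provided E[L(Y|X)] > 0. -/

import Mathlib

open MeasureTheory ProbabilityTheory Filter
open scoped ENNReal NNReal

private lemma aux_integrable_of_eq {Ω : Type*} [mΩ : MeasurableSpace Ω] (μ : Measure Ω)
    [IsFiniteMeasure μ] {f : Ω → ℝ} {S : Set Ω}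
    (hS : μ S = 0 → f =ᵐ[μ] 0)
    (heq : (μ S).toReal = ∫ ω, f ω ∂μ) : Integrable f μ := by
  by_cases h : Integrable f μ
  · exact h
  · rw [integral_undef h] at heq
    have h0 : μ S = 0 :=
      (ENNReal.toReal_eq_zero_iff (μ S) |>.mp heq).resolve_right (measure_ne_top μ S)
    exact absurd ((integrable_congr (hS h0)).mpr (integrable_zero _ _ _)) h

private lemma aux_ae_prod_fst {α β : Type*} [MeasurableSpace α] [MeasurableSpace β]
    (μ : Measure α) (ν : Measure β) [SFinite ν] {p : α → Prop} (h : ∀ᵐ x ∂μ, p x) :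
    ∀ᵐ z ∂(μ.prod ν), p z.1 := by
  rw [ae_iff] at h ⊢
  have hsub : {z : α × β | ¬ p z.1} ⊆ (toMeasurable μ {x | ¬ p x}) ×ˢ (Set.univ : Set β) :=
    fun z hz => Set.mem_prod.mpr ⟨subset_toMeasurable μ {x | ¬ p x} hz, Set.mem_univ _⟩
  refine measure_mono_null hsub ?_
  rw [Measure.prod_prod, measure_toMeasurable, h, zero_mul]

private lemma aux_sum_indicator {Ω S : Type*} [Fintype S] [DecidableEq S]
    (Θ : Ω → S) (T : Set Ω) (ω : Ω) :
    ∑ θ' : S, Set.indicator {ω' | Θ ω' = θ' ∧ ω' ∈ T} (fun _ => (1:ℝ)) ω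
      = Set.indicator T (fun _ => (1:ℝ)) ω := by
  by_cases hω : ω ∈ T
  · rw [Set.indicator_of_mem hω, Finset.sum_eq_single (Θ ω)]
    · exact Set.indicator_of_mem (show ω ∈ {ω' | Θ ω' = Θ ω ∧ ω' ∈ T} from ⟨rfl, hω⟩) _
    · intro b _ hb
      exact Set.indicator_of_notMem
        (show ω ∉ {ω' | Θ ω' = b ∧ ω' ∈ T} from fun hmem => hb (hmem.1.symm ▸ rfl)) _
    · simp
  · rw [Set.indicator_of_notMem hω]
    exact Finset.sum_eq_zero fun b _ => Set.indicator_of_notMem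
      (show ω ∉ {ω' | Θ ω' = b ∧ ω' ∈ T} from fun hmem => hω hmem.2) _

/-- Bayes correction with Rao-Blackwellization: if the conditional density of the
observation `Y` given `(Θ, X)` is `L (Y·) (X·)`, not depending on `Θ`, then
`P(Θ = θ, X ∈ A | Y) = E[ P(Θ = θ | X) · 1_{X ∈ A} · L(Y|X) ] / E[ L(Y|X) ]` a.s. -/
theorem stmt2 {Ω E S F : Type*} [mΩ : MeasurableSpace Ω]
    [MeasurableSpace E] [Fintype S] [MeasurableSpace S] [MeasurableSingletonClass S]
    [MeasurableSpace F]
    (μ : Measure Ω) [IsProbabilityMeasure μ]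
    (Θ : Ω → S) (X : Ω → E) (Y : Ω → F)
    (hΘ : Measurable Θ) (hX : Measurable X) (hY : Measurable Y)
    (lam : Measure F) [SigmaFinite lam]
    (L : F → E → ℝ) (hL : Measurable (Function.uncurry L)) (hL0 : ∀ y x, 0 ≤ L y x)
    -- the conditional density of `Y` given `(Θ, X)` is `L(y|x)`, independent of `θ`:
    (hdens : ∀ (θ : S) (A : Set E) (B : Set F), MeasurableSet A → MeasurableSet B →
      (μ {ω | Θ ω = θ ∧ X ω ∈ A ∧ Y ω ∈ B}).toReal
        = ∫ ω, Set.indicator {ω' | Θ ω' = θ ∧ X ω' ∈ A} (fun _ => (1:ℝ)) ω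
            * (∫ y in B, L y (X ω) ∂lam) ∂μ)
    -- `q θ` is a version of `P(Θ = θ | X)`:
    (q : S → Ω → ℝ)
    (hq : ∀ θ : S, q θ =ᵐ[μ]
      μ[Set.indicator {ω' | Θ ω' = θ} (fun _ => (1:ℝ)) |
        MeasurableSpace.comap X inferInstance])
    (hpos : ∀ᵐ ω ∂μ, 0 < ∫ ω', L (Y ω) (X ω') ∂μ) :
    ∀ (θ : S) (A : Set E), MeasurableSet A →
      μ[Set.indicator {ω' | Θ ω' = θ ∧ X ω' ∈ A} (fun _ => (1:ℝ)) |
          MeasurableSpace.comap Y inferInstance]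
        =ᵐ[μ]
      fun ω => (∫ ω', q θ ω' * Set.indicator A (fun _ => (1:ℝ)) (X ω') * L (Y ω) (X ω') ∂μ)
        / (∫ ω', L (Y ω) (X ω') ∂μ) := by
  intro θ A hA
  classical
  -- basic measurability
  have hXc : @Measurable Ω E (MeasurableSpace.comap X inferInstance) _ X := fun s hs => ⟨s, hs, rfl⟩
  have hYc : @Measurable Ω F (MeasurableSpace.comap Y inferInstance) _ Y := fun s hs => ⟨s, hs, rfl⟩
  have hmX : MeasurableSpace.comap X inferInstance ≤ mΩ := hX.comap_le
  have hmY : MeasurableSpace.comap Y inferInstance ≤ mΩ := hY.comap_le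
  have hLX : Measurable (fun p : Ω × F => L p.2 (X p.1)) :=
    hL.comp ((measurable_snd).prodMk (hX.comp measurable_fst))
  have hLX' : Measurable (fun p : F × Ω => L p.1 (X p.2)) :=
    hL.comp ((measurable_fst).prodMk (hX.comp measurable_snd))
  -- the density integrated over B, as a function of x
  set hB : Set F → E → ℝ := fun B x => ∫ y in B, L y x ∂lam with hhB
  have hB_meas : ∀ B : Set F, StronglyMeasurable (fun x => hB B x) := by
    intro B
    exact (hL.comp ((measurable_snd).prodMk measurable_fst)).stronglyMeasurable.integral_prod_right'
      (ν := lam.restrict B)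
  have hB_nonneg : ∀ B x, 0 ≤ hB B x := fun B x => integral_nonneg fun y => hL0 y x
  have hsetθA : ∀ (θ' : S) (A' : Set E), MeasurableSet A' →
      MeasurableSet {ω' | Θ ω' = θ' ∧ X ω' ∈ A'} := by
    intro θ' A' hA'
    exact (hΘ (measurableSet_singleton θ')).inter (hX hA')
  -- the master summation step
  have hkey : ∀ (A' : Set E) (B : Set F), MeasurableSet A' → MeasurableSet B →
      (∀ θ' : S, Integrable (fun ω =>
        Set.indicator {ω' | Θ ω' = θ' ∧ X ω' ∈ A'} (fun _ => (1:ℝ)) ω * hB B (X ω)) μ) →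
      (μ (X ⁻¹' A' ∩ Y ⁻¹' B)).toReal
        = ∫ ω, Set.indicator (X ⁻¹' A') (fun _ => (1:ℝ)) ω * hB B (X ω) ∂μ ∧
      Integrable (fun ω => Set.indicator (X ⁻¹' A') (fun _ => (1:ℝ)) ω * hB B (X ω)) μ := by
    intro A' B hA' hBm hint
    have hpt : ∀ ω, ∑ θ' : S, Set.indicator {ω' | Θ ω' = θ' ∧ X ω' ∈ A'} (fun _ => (1:ℝ)) ω
        * hB B (X ω) = Set.indicator (X ⁻¹' A') (fun _ => (1:ℝ)) ω * hB B (X ω) := by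
      intro ω
      rw [← Finset.sum_mul]
      congr 1
      exact aux_sum_indicator Θ (X ⁻¹' A') ω
    have hint2 : Integrable (fun ω => Set.indicator (X ⁻¹' A') (fun _ => (1:ℝ)) ω
        * hB B (X ω)) μ := by
      refine (integrable_finset_sum Finset.univ (fun θ' _ => hint θ')).congr ?_
      exact ae_of_all _ hpt
    refine ⟨?_, hint2⟩
    have hU : X ⁻¹' A' ∩ Y ⁻¹' B = ⋃ θ' : S, {ω | Θ ω = θ' ∧ X ω ∈ A' ∧ Y ω ∈ B} := by
      ext ω
      simp [Set.mem_iUnion]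
    have hdisj : Pairwise (Function.onFun Disjoint
        fun θ' : S => {ω | Θ ω = θ' ∧ X ω ∈ A' ∧ Y ω ∈ B}) := by
      intro a b hab
      refine Set.disjoint_left.mpr fun ω ha hb => hab ?_
      rw [← ha.1, ← hb.1]
    have hmeas : ∀ θ' : S, MeasurableSet {ω | Θ ω = θ' ∧ X ω ∈ A' ∧ Y ω ∈ B} := by
      intro θ'
      have : {ω | Θ ω = θ' ∧ X ω ∈ A' ∧ Y ω ∈ B}
          = {ω' | Θ ω' = θ' ∧ X ω' ∈ A'} ∩ Y ⁻¹' B := by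
        ext ω; simp [Set.mem_setOf_eq]; tauto
      rw [this]
      exact (hsetθA θ' A' hA').inter (hY hBm)
    rw [hU, measure_iUnion hdisj hmeas, tsum_fintype, ENNReal.toReal_sum
      (fun θ' _ => measure_ne_top μ _)]
    calc ∑ θ' : S, (μ {ω | Θ ω = θ' ∧ X ω ∈ A' ∧ Y ω ∈ B}).toReal
        = ∑ θ' : S, ∫ ω, Set.indicator {ω' | Θ ω' = θ' ∧ X ω' ∈ A'} (fun _ => (1:ℝ)) ω
            * hB B (X ω) ∂μ := by
          exact Finset.sum_congr rfl fun θ' _ => hdens θ' A' B hA' hBm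
      _ = ∫ ω, ∑ θ' : S, Set.indicator {ω' | Θ ω' = θ' ∧ X ω' ∈ A'} (fun _ => (1:ℝ)) ω
            * hB B (X ω) ∂μ := (integral_finset_sum Finset.univ fun θ' _ => hint θ').symm
      _ = ∫ ω, Set.indicator (X ⁻¹' A') (fun _ => (1:ℝ)) ω * hB B (X ω) ∂μ :=
          integral_congr_ae (ae_of_all _ hpt)
  -- integrability for B = univ, from the density identity itself
  have hint_univ : ∀ (θ' : S) (A' : Set E), MeasurableSet A' →
      Integrable (fun ω =>
        Set.indicator {ω' | Θ ω' = θ' ∧ X ω' ∈ A'} (fun _ => (1:ℝ)) ω * hB Set.univ (X ω)) μ := by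
    intro θ' A' hA'
    refine aux_integrable_of_eq μ (S := {ω | Θ ω = θ' ∧ X ω ∈ A' ∧ Y ω ∈ Set.univ}) ?_ ?_
    · intro h0
      have h0' : μ {ω' | Θ ω' = θ' ∧ X ω' ∈ A'} = 0 := by
        rw [← h0]; congr 1; ext ω; simp
      have := measure_eq_zero_iff_ae_notMem.mp h0'
      filter_upwards [this] with ω hω
      have hz : Set.indicator {ω' | Θ ω' = θ' ∧ X ω' ∈ A'} (fun _ => (1:ℝ)) ω = 0 :=
        Set.indicator_of_notMem (s := {ω' | Θ ω' = θ' ∧ X ω' ∈ A'}) hω _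
      simp [hz]
    · exact hdens θ' A' Set.univ hA' MeasurableSet.univ
  have hsum : ∀ (A' : Set E), MeasurableSet A' →
      (μ (X ⁻¹' A')).toReal = ∫ ω, Set.indicator (X ⁻¹' A') (fun _ => (1:ℝ)) ω
        * hB Set.univ (X ω) ∂μ ∧
      Integrable (fun ω => Set.indicator (X ⁻¹' A') (fun _ => (1:ℝ)) ω
        * hB Set.univ (X ω)) μ := by
    intro A' hA'
    have := hkey A' Set.univ hA' MeasurableSet.univ (hint_univ · A' hA')
    simpa using this
  -- h ∘ X = 1 a.e.
  have hone : ∀ᵐ ω ∂μ, hB Set.univ (X ω) = 1 := by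
    have hXae : AEMeasurable X μ := hX.aemeasurable
    have hints : Integrable (fun x => hB Set.univ x) (μ.map X) := by
      rw [integrable_map_measure ((hB_meas Set.univ).aestronglyMeasurable) hXae]
      refine (hsum Set.univ MeasurableSet.univ).2.congr (ae_of_all _ fun ω => ?_)
      simp
    have hae : (fun x => hB Set.univ x) =ᵐ[μ.map X] fun _ => (1:ℝ) := by
      refine ae_eq_of_forall_setIntegral_eq_of_sigmaFinite
        (fun s _ _ => hints.integrableOn) (fun s _ _ => (integrable_const 1).integrableOn) ?_
      intro s hs _
      rw [setIntegral_map hs ((hB_meas Set.univ).aestronglyMeasurable) hXae,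
        setIntegral_const, smul_eq_mul, mul_one, measureReal_def, Measure.map_apply hX hs]
      calc ∫ ω in X ⁻¹' s, hB Set.univ (X ω) ∂μ
          = ∫ ω, Set.indicator (X ⁻¹' s) (fun _ => (1:ℝ)) ω * hB Set.univ (X ω) ∂μ := by
            rw [← integral_indicator (hX hs)]
            refine integral_congr_ae (ae_of_all _ fun ω => ?_)
            by_cases hω : ω ∈ X ⁻¹' s
            · simp [Set.indicator_of_mem hω]
            · simp [Set.indicator_of_notMem hω]
        _ = (μ (X ⁻¹' s)).toReal := ((hsum s hs).1).symm
    have hmeas1 : MeasurableSet {x | hB Set.univ x = 1} :=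
      (hB_meas Set.univ).measurable (measurableSet_singleton 1)
    exact (ae_map_iff hXae hmeas1).mp hae
  -- sections in y are integrable, a.e. ω
  have hint_sec : ∀ᵐ ω ∂μ, Integrable (fun y => L y (X ω)) lam := by
    filter_upwards [hone] with ω hω
    by_contra hcon
    rw [hhB] at hω
    simp only [Measure.restrict_univ] at hω
    rw [integral_undef hcon] at hω
    norm_num at hω
  -- hB bounded by 1 a.e.
  have hB_le_one : ∀ (B : Set F), ∀ᵐ ω ∂μ, hB B (X ω) ≤ 1 := by
    intro B
    filter_upwards [hint_sec, hone] with ω h1 h2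
    calc hB B (X ω) ≤ ∫ y, L y (X ω) ∂lam :=
          setIntegral_le_integral h1 (ae_of_all _ fun y => hL0 y (X ω))
      _ = hB Set.univ (X ω) := by rw [hhB]; simp
      _ = 1 := h2
  -- joint integrability
  have hjoint : Integrable (fun p : Ω × F => L p.2 (X p.1)) (μ.prod lam) := by
    rw [integrable_prod_iff hLX.aestronglyMeasurable]
    constructor
    · exact hint_sec
    · have h1 : Integrable (fun ω => hB Set.univ (X ω)) μ :=
        (hsum Set.univ MeasurableSet.univ).2.congr (ae_of_all _ fun ω => by simp)
      refine h1.congr (ae_of_all _ fun ω => ?_)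
      rw [hhB]
      simp only [Measure.restrict_univ]
      exact integral_congr_ae (ae_of_all _ fun y => (Real.norm_of_nonneg (hL0 y (X ω))).symm)
  have hsec_y : ∀ᵐ y ∂lam, Integrable (fun ω => L y (X ω)) μ := hjoint.prod_left_ae
  -- conditional expectation q'
  set q' : Ω → ℝ := μ[Set.indicator {ω' | Θ ω' = θ} (fun _ => (1:ℝ)) |
      MeasurableSpace.comap X inferInstance] with hq'def
  have hq'_meas : StronglyMeasurable[MeasurableSpace.comap X inferInstance] q' :=
    stronglyMeasurable_condExp
  have hind_int : Integrable (Set.indicator {ω' | Θ ω' = θ} (fun _ => (1:ℝ))) μ :=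
    (integrable_const 1).indicator (hΘ (measurableSet_singleton θ))
  have hq'_bounds : ∀ᵐ ω ∂μ, 0 ≤ q' ω ∧ q' ω ≤ 1 := by
    have h1 : 0 ≤ᵐ[μ] q' :=
      condExp_nonneg (ae_of_all _ fun ω => Set.indicator_nonneg (fun _ _ => zero_le_one) ω)
    have h2 : q' ≤ᵐ[μ] μ[(fun _ => (1:ℝ)) | MeasurableSpace.comap X inferInstance] := by
      refine condExp_mono hind_int (integrable_const 1) (ae_of_all _ fun ω => ?_)
      exact Set.indicator_le' (fun _ _ => le_refl 1) (fun _ _ => zero_le_one) ω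
    rw [condExp_const hmX] at h2
    filter_upwards [h1, h2] with ω hω1 hω2
    exact ⟨hω1, hω2⟩
  -- projection step via conditional expectation
  have hcond : ∀ (B : Set F), MeasurableSet B →
      ∫ ω', q' ω' * Set.indicator A (fun _ => (1:ℝ)) (X ω') * hB B (X ω') ∂μ
        = (μ {ω | Θ ω = θ ∧ X ω ∈ A ∧ Y ω ∈ B}).toReal := by
    intro B hBm
    set g' : Ω → ℝ := fun ω => Set.indicator A (fun _ => (1:ℝ)) (X ω) * hB B (X ω) with hg'
    have hg'm : StronglyMeasurable[MeasurableSpace.comap X inferInstance] g' := by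
      have hm' : Measurable (fun x => Set.indicator A (fun _ => (1:ℝ)) x * hB B x) :=
        (measurable_const.indicator hA).mul (hB_meas B).measurable
      exact (hm'.comp hXc).stronglyMeasurable
    have hindA_le : ∀ x, Set.indicator A (fun _ => (1:ℝ)) x ≤ 1 := fun x =>
      Set.indicator_le' (fun _ _ => le_refl 1) (fun _ _ => zero_le_one) x
    have hindA_nn : ∀ x, 0 ≤ Set.indicator A (fun _ => (1:ℝ)) x := fun x =>
      Set.indicator_nonneg (fun _ _ => zero_le_one) x
    have hbound : ∀ᵐ ω ∂μ, ‖g' ω‖ ≤ 1 := by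
      filter_upwards [hB_le_one B] with ω hω
      rw [hg', Real.norm_of_nonneg (mul_nonneg (hindA_nn _) (hB_nonneg B _))]
      calc Set.indicator A (fun _ => (1:ℝ)) (X ω) * hB B (X ω)
          ≤ 1 * 1 := mul_le_mul (hindA_le _) hω (hB_nonneg B _) zero_le_one
        _ = 1 := by ring
    have hmul := condExp_stronglyMeasurable_mul_of_bound hmX hg'm hind_int 1 hbound
    have hGint : Integrable (g' * Set.indicator {ω' | Θ ω' = θ} (fun _ => (1:ℝ))) μ := by
      refine Integrable.mono' (integrable_const (1:ℝ)) ?_ ?_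
      · exact ((hg'm.mono hmX).aestronglyMeasurable).mul
          (hind_int.aestronglyMeasurable)
      · filter_upwards [hbound] with ω hω
        rw [Pi.mul_apply, norm_mul]
        calc ‖g' ω‖ * ‖Set.indicator {ω' | Θ ω' = θ} (fun _ => (1:ℝ)) ω‖
            ≤ 1 * 1 := by
              refine mul_le_mul hω ?_ (norm_nonneg _) zero_le_one
              rw [Real.norm_of_nonneg (Set.indicator_nonneg (fun _ _ => zero_le_one) _)]
              exact Set.indicator_le' (fun _ _ => le_refl 1) (fun _ _ => zero_le_one) ω
          _ = 1 := by ring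
    calc ∫ ω', q' ω' * Set.indicator A (fun _ => (1:ℝ)) (X ω') * hB B (X ω') ∂μ
        = ∫ ω', (g' * μ[Set.indicator {ω' | Θ ω' = θ} (fun _ => (1:ℝ)) |
            MeasurableSpace.comap X inferInstance]) ω' ∂μ := by
          refine integral_congr_ae (ae_of_all _ fun ω => ?_)
          simp only [Pi.mul_apply, hg', ← hq'def]
          ring
      _ = ∫ ω', (μ[g' * Set.indicator {ω' | Θ ω' = θ} (fun _ => (1:ℝ)) |
            MeasurableSpace.comap X inferInstance]) ω' ∂μ := (integral_congr_ae hmul).symm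
      _ = ∫ ω', (g' * Set.indicator {ω' | Θ ω' = θ} (fun _ => (1:ℝ))) ω' ∂μ :=
          integral_condExp hmX
      _ = ∫ ω, Set.indicator {ω' | Θ ω' = θ ∧ X ω' ∈ A} (fun _ => (1:ℝ)) ω
            * hB B (X ω) ∂μ := by
          refine integral_congr_ae (ae_of_all _ fun ω => ?_)
          simp only [Pi.mul_apply, hg', Set.indicator_apply, Set.mem_setOf_eq]
          by_cases h1 : Θ ω = θ <;> by_cases h2 : X ω ∈ A <;> simp [h1, h2]
      _ = (μ {ω | Θ ω = θ ∧ X ω ∈ A ∧ Y ω ∈ B}).toReal := (hdens θ A B hA hBm).symm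
  -- numerator and denominator
  set den : F → ℝ := fun y => ∫ ω', L y (X ω') ∂μ with hden
  set num : F → ℝ := fun y => ∫ ω', q' ω' * Set.indicator A (fun _ => (1:ℝ)) (X ω')
      * L y (X ω') ∂μ with hnum
  have hden_meas : StronglyMeasurable den :=
    hLX'.stronglyMeasurable.integral_prod_right' (ν := μ)
  have hq'm0 : StronglyMeasurable q' := hq'_meas.mono hmX
  have hnum_meas : StronglyMeasurable num := by
    have hsm : StronglyMeasurable (fun p : F × Ω => q' p.2
        * Set.indicator A (fun _ => (1:ℝ)) (X p.2) * L p.1 (X p.2)) := by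
      refine StronglyMeasurable.mul ?_ hLX'.stronglyMeasurable
      refine StronglyMeasurable.mul (hq'm0.comp_measurable measurable_snd) ?_
      exact ((measurable_const.indicator hA).comp (hX.comp measurable_snd)).stronglyMeasurable
    exact hsm.integral_prod_right' (ν := μ)
  have hden_nonneg : ∀ y, 0 ≤ den y := fun y => integral_nonneg fun ω' => hL0 y (X ω')
  have hindA_le : ∀ x, Set.indicator A (fun _ => (1:ℝ)) x ≤ 1 := fun x =>
    Set.indicator_le' (fun _ _ => le_refl 1) (fun _ _ => zero_le_one) x
  have hindA_nn : ∀ x, 0 ≤ Set.indicator A (fun _ => (1:ℝ)) x := fun x =>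
    Set.indicator_nonneg (fun _ _ => zero_le_one) x
  -- bounds on num and den, given section integrability
  have hnd : ∀ y : F, Integrable (fun ω' => L y (X ω')) μ → 0 ≤ num y ∧ num y ≤ den y := by
    intro y hI
    have hib : Integrable (fun ω' => q' ω' * Set.indicator A (fun _ => (1:ℝ)) (X ω')
        * L y (X ω')) μ := by
      refine Integrable.mono' hI ?_ ?_
      · exact ((hq'm0.aestronglyMeasurable).mul
          (((measurable_const.indicator hA).comp hX).aestronglyMeasurable)).mul
          (hLX'.comp (measurable_const.prodMk measurable_id)).aestronglyMeasurable
      · filter_upwards [hq'_bounds] with ω' hb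
        rw [Real.norm_of_nonneg (mul_nonneg (mul_nonneg hb.1 (hindA_nn _)) (hL0 _ _))]
        calc q' ω' * Set.indicator A (fun _ => (1:ℝ)) (X ω') * L y (X ω')
            ≤ 1 * 1 * L y (X ω') := by
              refine mul_le_mul ?_ (le_refl _) (hL0 _ _) (by norm_num)
              exact mul_le_mul hb.2 (hindA_le _) (hindA_nn _) zero_le_one
          _ = L y (X ω') := by ring
    constructor
    · refine integral_nonneg_of_ae ?_
      filter_upwards [hq'_bounds] with ω' hb
      exact mul_nonneg (mul_nonneg hb.1 (hindA_nn _)) (hL0 _ _)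
    · refine integral_mono_ae hib hI ?_
      filter_upwards [hq'_bounds] with ω' hb
      calc q' ω' * Set.indicator A (fun _ => (1:ℝ)) (X ω') * L y (X ω')
          ≤ 1 * 1 * L y (X ω') := by
            refine mul_le_mul ?_ (le_refl _) (hL0 _ _) (by norm_num)
            exact mul_le_mul hb.2 (hindA_le _) (hindA_nn _) zero_le_one
        _ = L y (X ω') := by ring
  have hG_bounds : ∀ y, 0 ≤ num y / den y ∧ num y / den y ≤ 1 := by
    intro y
    by_cases hI : Integrable (fun ω' => L y (X ω')) μ
    · obtain ⟨h1, h2⟩ := hnd y hI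
      exact ⟨div_nonneg h1 (hden_nonneg y), div_le_one_of_le₀ h2 (hden_nonneg y)⟩
    · have h0 : den y = 0 := integral_undef hI
      rw [h0, div_zero]
      norm_num
  have hnum_eq : ∀ᵐ y ∂lam, den y * (num y / den y) = num y := by
    filter_upwards [hsec_y] with y hI
    obtain ⟨h1, h2⟩ := hnd y hI
    rcases eq_or_ne (den y) 0 with h0 | h0
    · have : num y = 0 := le_antisymm (h2.trans_eq h0) h1
      rw [h0, this, zero_mul]
    · rw [mul_comm, div_mul_cancel₀ _ h0]
  -- the law of Y has density den with respect to lam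
  have hlawY : ∀ (B : Set F), MeasurableSet B →
      (μ (Y ⁻¹' B)).toReal = ∫ y in B, den y ∂lam := by
    intro B hBm
    have hintB : ∀ θ' : S, Integrable (fun ω =>
        Set.indicator {ω' | Θ ω' = θ' ∧ X ω' ∈ Set.univ} (fun _ => (1:ℝ)) ω
          * hB B (X ω)) μ := by
      intro θ'
      refine Integrable.mono' (integrable_const (1:ℝ)) ?_ ?_
      · refine AEStronglyMeasurable.mul ?_ ((hB_meas B).comp_measurable hX).aestronglyMeasurable
        exact ((integrable_const (1:ℝ)).indicator
          (hsetθA θ' Set.univ MeasurableSet.univ)).aestronglyMeasurable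
      · filter_upwards [hB_le_one B] with ω hω
        rw [Real.norm_of_nonneg (mul_nonneg (Set.indicator_nonneg (fun _ _ => zero_le_one) _)
          (hB_nonneg B _))]
        calc Set.indicator {ω' | Θ ω' = θ' ∧ X ω' ∈ Set.univ} (fun _ => (1:ℝ)) ω * hB B (X ω)
            ≤ 1 * 1 := by
              refine mul_le_mul ?_ hω (hB_nonneg B _) zero_le_one
              exact Set.indicator_le' (fun _ _ => le_refl 1) (fun _ _ => zero_le_one) ω
          _ = 1 := by ring
    have hk := (hkey Set.univ B MeasurableSet.univ hBm hintB).1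
    have hYB : X ⁻¹' Set.univ ∩ Y ⁻¹' B = Y ⁻¹' B := by simp
    rw [hYB] at hk
    rw [hk]
    -- Fubini
    have hprodint : Integrable (Function.uncurry fun ω y => L y (X ω))
        (μ.prod (lam.restrict B)) := by
      have : μ.prod (lam.restrict B) = (μ.prod lam).restrict (Set.univ ×ˢ B) := by
        rw [← Measure.prod_restrict, Measure.restrict_univ]
      rw [this]
      exact hjoint.integrableOn
    have hswap := integral_integral_swap (f := fun ω y => L y (X ω))
      (μ := μ) (ν := lam.restrict B) hprodint
    calc ∫ ω, Set.indicator (X ⁻¹' Set.univ) (fun _ => (1:ℝ)) ω * hB B (X ω) ∂μ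
        = ∫ ω, ∫ y in B, L y (X ω) ∂lam ∂μ := by
          refine integral_congr_ae (ae_of_all _ fun ω => ?_)
          simp [hhB]
      _ = ∫ y in B, ∫ ω, L y (X ω) ∂μ ∂lam := hswap
      _ = ∫ y in B, den y ∂lam := rfl
  have hmapY : μ.map Y = lam.withDensity (fun y => ENNReal.ofReal (den y)) := by
    have hlint : ∀ (B : Set F), MeasurableSet B →
        ∫ y in B, den y ∂lam = (∫⁻ y in B, ENNReal.ofReal (den y) ∂lam).toReal := by
      intro B hBm
      rw [integral_eq_lintegral_of_nonneg_ae (ae_of_all _ fun y => hden_nonneg y)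
        hden_meas.aestronglyMeasurable]
    have hfin : ∫⁻ y, ENNReal.ofReal (den y) ∂lam ≠ ⊤ := by
      intro hc
      have h1 : (μ (Y ⁻¹' Set.univ)).toReal = 1 := by simp
      have h2 := hlawY Set.univ MeasurableSet.univ
      rw [hlint Set.univ MeasurableSet.univ] at h2
      simp only [Measure.restrict_univ] at h2
      rw [hc] at h2
      rw [h1] at h2
      norm_num at h2
    refine Measure.ext fun B hBm => ?_
    rw [Measure.map_apply hY hBm, withDensity_apply _ hBm]
    have hfinB : ∫⁻ y in B, ENNReal.ofReal (den y) ∂lam ≠ ⊤ := by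
      refine ne_top_of_le_ne_top hfin ?_
      exact setLIntegral_le_lintegral _ _
    have := hlawY B hBm
    rw [hlint B hBm] at this
    exact (ENNReal.toReal_eq_toReal_iff' (measure_ne_top μ _) hfinB).mp this
  -- the target function is (num / den) ∘ Y
  have htarget : (fun ω => (∫ ω', q θ ω' * Set.indicator A (fun _ => (1:ℝ)) (X ω')
      * L (Y ω) (X ω') ∂μ) / (∫ ω', L (Y ω) (X ω') ∂μ))
      = fun ω => num (Y ω) / den (Y ω) := by
    funext ω
    congr 1
    refine integral_congr_ae ?_
    filter_upwards [hq θ] with ω' h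
    simp only [h, hq'def]
  rw [htarget]
  have hf_int : Integrable (Set.indicator {ω' | Θ ω' = θ ∧ X ω' ∈ A} (fun _ => (1:ℝ))) μ :=
    (integrable_const 1).indicator (hsetθA θ A hA)
  have hGY_meas : StronglyMeasurable[MeasurableSpace.comap Y inferInstance]
      (fun ω => num (Y ω) / den (Y ω)) :=
    ((hnum_meas.measurable.div hden_meas.measurable).comp hYc).stronglyMeasurable
  have hGY_int : Integrable (fun ω => num (Y ω) / den (Y ω)) μ := by
    refine Integrable.mono' (integrable_const (1:ℝ))
      ((hGY_meas.mono hmY).aestronglyMeasurable) (ae_of_all _ fun ω => ?_)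
    rw [Real.norm_of_nonneg (hG_bounds (Y ω)).1]
    exact (hG_bounds (Y ω)).2
  refine Filter.EventuallyEq.symm (ae_eq_condExp_of_forall_setIntegral_eq hmY hf_int
    (fun s _ _ => hGY_int.integrableOn) ?_ hGY_meas.aestronglyMeasurable)
  rintro s ⟨B, hBm, rfl⟩ _
  have hmain : ∫ ω in Y ⁻¹' B, num (Y ω) / den (Y ω) ∂μ
      = (μ {ω | Θ ω = θ ∧ X ω ∈ A ∧ Y ω ∈ B}).toReal := by
    have hGmeas : AEStronglyMeasurable (fun y => num y / den y) (μ.map Y) :=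
      (hnum_meas.measurable.div hden_meas.measurable).aestronglyMeasurable
    calc ∫ ω in Y ⁻¹' B, num (Y ω) / den (Y ω) ∂μ
        = ∫ y in B, num y / den y ∂(μ.map Y) :=
          (setIntegral_map hBm hGmeas hY.aemeasurable).symm
      _ = ∫ y in B, num y / den y
            ∂(lam.withDensity fun y => ENNReal.ofReal (den y)) := by rw [hmapY]
      _ = ∫ y in B, den y * (num y / den y) ∂lam := by
          rw [restrict_withDensity hBm]
          have hcoe : (fun y => ENNReal.ofReal (den y))
              = fun y => ((den y).toNNReal : ℝ≥0∞) := rfl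
          rw [hcoe, integral_withDensity_eq_integral_smul hden_meas.measurable.real_toNNReal _]
          refine integral_congr_ae (ae_of_all _ fun y => ?_)
          show (den y).toNNReal • (num y / den y) = den y * (num y / den y)
          rw [NNReal.smul_def, smul_eq_mul, Real.coe_toNNReal _ (hden_nonneg y)]
      _ = ∫ y in B, num y ∂lam := integral_congr_ae (ae_restrict_of_ae hnum_eq)
      _ = ∫ ω', q' ω' * Set.indicator A (fun _ => (1:ℝ)) (X ω') * hB B (X ω') ∂μ := by
          have hbase : Integrable (fun p : Ω × F => L p.2 (X p.1))
              (μ.prod (lam.restrict B)) := by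
            have heq : μ.prod (lam.restrict B) = (μ.prod lam).restrict (Set.univ ×ˢ B) := by
              rw [← Measure.prod_restrict, Measure.restrict_univ]
            rw [heq]
            exact hjoint.integrableOn
          have hprodint : Integrable (Function.uncurry fun ω' y =>
              q' ω' * Set.indicator A (fun _ => (1:ℝ)) (X ω') * L y (X ω'))
              (μ.prod (lam.restrict B)) := by
            refine Integrable.mono' hbase ?_ ?_
            · have hm' : Measurable (fun p : Ω × F => q' p.1
                  * Set.indicator A (fun _ => (1:ℝ)) (X p.1) * L p.2 (X p.1)) := by
                refine Measurable.mul ?_ hLX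
                exact ((hq'm0.measurable.comp measurable_fst).mul
                  ((measurable_const.indicator hA).comp (hX.comp measurable_fst)))
              exact hm'.aestronglyMeasurable
            · refine (aux_ae_prod_fst μ (lam.restrict B) hq'_bounds).mono fun p hp => ?_
              simp only [Function.uncurry]
              rw [Real.norm_of_nonneg (mul_nonneg (mul_nonneg hp.1 (hindA_nn _)) (hL0 _ _))]
              calc q' p.1 * Set.indicator A (fun _ => (1:ℝ)) (X p.1) * L p.2 (X p.1)
                  ≤ 1 * 1 * L p.2 (X p.1) := by
                    refine mul_le_mul ?_ (le_refl _) (hL0 _ _) (by norm_num)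
                    exact mul_le_mul hp.2 (hindA_le _) (hindA_nn _) zero_le_one
                _ = L p.2 (X p.1) := by ring
          have hswap := integral_integral_swap (f := fun ω' y =>
            q' ω' * Set.indicator A (fun _ => (1:ℝ)) (X ω') * L y (X ω'))
            (μ := μ) (ν := lam.restrict B) hprodint
          rw [hnum, ← hswap]
          refine integral_congr_ae (ae_of_all _ fun ω' => ?_)
          simp only [hhB]
          rw [integral_const_mul]
      _ = (μ {ω | Θ ω = θ ∧ X ω ∈ A ∧ Y ω ∈ B}).toReal := hcond B hBm
  have hseteq : Y ⁻¹' B ∩ {ω' | Θ ω' = θ ∧ X ω' ∈ A}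
      = {ω | Θ ω = θ ∧ X ω ∈ A ∧ Y ω ∈ B} := by
    ext ω
    simp only [Set.mem_inter_iff, Set.mem_preimage, Set.mem_setOf_eq]
    tauto
  rw [hmain, setIntegral_indicator (hsetθA θ A hA), hseteq, setIntegral_const,
    smul_eq_mul, mul_one, measureReal_def]
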